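/- Let K be a compact subset with nonempty interior of the half-plane {s ∈ ℂ : Re(s) > 0}, and let (x(k))_{k≥1} be a complex sequence such that the Dirichlet series Σ_{k≥1} x(k) k^{−s} converges for every s with Re(s) > 0, with sum f_x. Then Parseval's identity holds for f_x with respect to the orthonormal family (e′_n(K))_{n≥1}: ‖f_x‖²_{L²(K)} = Σ_{n≥1} |⟨e′_n(K), f_x⟩_{L²(K)}|². In particular, f_x belongs to the closure in L²(K) of the linear span of the functions s ↦ n^{−s}, n ≥ 1. -/

import Mathlib

open MeasureTheory Complex Filter

/-- The function `e_n : s ↦ n^{-s}` (with 1-based indexing: `eDir n = e_{n+1}`). -/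
noncomputable def eDir (n : ℕ) : ℂ → ℂ := fun s => ((n + 1 : ℕ) : ℂ) ^ (-s)

theorem eDir_memℒp {K : Set ℂ} (hK : IsCompact K) (n : ℕ) :
    MemLp (eDir n) 2 (volume.restrict K) := by
  have hc : Continuous (eDir n) :=
    Continuous.const_cpow continuous_neg (Or.inl (by exact_mod_cast Nat.succ_ne_zero n))
  haveI : IsFiniteMeasure (volume.restrict K) :=
    ⟨by simpa [Measure.restrict_apply_univ] using hK.measure_lt_top⟩
  obtain ⟨C, hC⟩ := hK.exists_bound_of_continuousOn hc.continuousOn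
  exact MemLp.of_bound hc.aestronglyMeasurable C
    ((ae_restrict_iff' hK.measurableSet).mpr (Filter.Eventually.of_forall hC))

/-- `e_n` as an element of the Hilbert space `L²(K)`. -/
noncomputable def eLp {K : Set ℂ} (hK : IsCompact K) (n : ℕ) :
    Lp ℂ 2 (volume.restrict K) :=
  (eDir_memℒp hK n).toLp (eDir n)

/-- `e′_n(K)`: the Gram–Schmidt orthonormalization in `L²(K)` of the family `(e_n)`. -/
noncomputable def ePrime {K : Set ℂ} (hK : IsCompact K) : ℕ → Lp ℂ 2 (volume.restrict K) :=
  InnerProductSpace.gramSchmidtNormed ℂ (eLp hK)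



open scoped InnerProductSpace

lemma cpow_diff_bound {w : ℂ} (hw : 0 < w.re) (k : ℕ) :
    ‖((k + 2 : ℕ) : ℂ) ^ (-w) - ((k + 1 : ℕ) : ℂ) ^ (-w)‖
      ≤ ‖w‖ * ((k + 1 : ℝ)) ^ (-w.re - 1) := by
  set g : ℝ → ℂ := fun t => (t : ℂ) ^ (-w) with hg
  have hderiv : ∀ t ∈ Set.Icc (k + 1 : ℝ) (k + 2 : ℝ),
      HasDerivWithinAt g (-w * (t : ℂ) ^ (-w - 1)) (Set.Icc (k + 1 : ℝ) (k + 2)) t := by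
    intro t ht
    have ht0 : (0 : ℝ) < t := lt_of_lt_of_le (by positivity) ht.1
    have h1 : HasDerivAt (fun z : ℂ => z ^ (-w)) (-w * (t : ℂ) ^ (-w - 1)) (t : ℂ) := by
      simpa using (Complex.hasStrictDerivAt_cpow_const (c := -w)
        (by exact Complex.ofReal_mem_slitPlane.2 ht0)).hasDerivAt
    exact (h1.comp_ofReal).hasDerivWithinAt
  have hbound : ∀ t ∈ Set.Icc (k + 1 : ℝ) (k + 2 : ℝ),
      ‖-w * (t : ℂ) ^ (-w - 1)‖ ≤ ‖w‖ * ((k + 1 : ℝ)) ^ (-w.re - 1) := by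
    intro t ht
    have ht1 : (1 : ℝ) ≤ t := le_trans (by linarith [Nat.cast_nonneg (α := ℝ) k] : (1:ℝ) ≤ k+1) ht.1
    have ht0 : (0 : ℝ) < t := lt_of_lt_of_le zero_lt_one ht1
    rw [norm_mul, norm_neg]
    refine mul_le_mul_of_nonneg_left ?_ (norm_nonneg w)
    rw [Complex.norm_cpow_eq_rpow_re_of_pos ht0]
    have : (-w - 1).re = -w.re - 1 := by simp
    rw [this]
    calc t ^ (-w.re - 1) ≤ (k + 1 : ℝ) ^ (-w.re - 1) :=
          Real.rpow_le_rpow_of_nonpos (by positivity) ht.1 (by linarith)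
      _ ≤ (k + 1 : ℝ) ^ (-w.re - 1) := le_rfl
  have := (convex_Icc (k + 1 : ℝ) (k + 2)).norm_image_sub_le_of_norm_hasDerivWithin_le
    hderiv hbound (Set.left_mem_Icc.2 (by linarith)) (Set.right_mem_Icc.2 (by linarith))
  have h2 : ‖g (k + 2 : ℝ) - g (k + 1 : ℝ)‖ ≤ ‖w‖ * ((k + 1 : ℝ)) ^ (-w.re - 1) := by
    have habs : |(2 : ℝ) - 1| = 1 := by norm_num
    calc ‖g (k + 2 : ℝ) - g (k + 1 : ℝ)‖
        ≤ ‖w‖ * ((k + 1 : ℝ)) ^ (-w.re - 1) * ‖(k + 2 : ℝ) - (k + 1 : ℝ)‖ := this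
      _ = ‖w‖ * ((k + 1 : ℝ)) ^ (-w.re - 1) := by norm_num
  have e1 : ((k + 2 : ℕ) : ℂ) = (((k : ℝ) + 2 : ℝ) : ℂ) := by push_cast; ring
  have e2 : ((k + 1 : ℕ) : ℂ) = (((k : ℝ) + 1 : ℝ) : ℂ) := by push_cast; ring
  rw [e1, e2]
  exact h2

lemma psummable {δ : ℝ} (hδ : 0 < δ) : Summable (fun i : ℕ => ((i + 1 : ℝ)) ^ (-δ - 1)) := by
  have h2 : Summable (fun n : ℕ => ((n : ℝ) ^ (δ + 1))⁻¹) :=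
    Real.summable_nat_rpow_inv.2 (by linarith)
  have h3 := h2.comp_injective (add_left_injective 1)
  refine h3.congr fun i => ?_
  simp only [Function.comp]
  rw [← Real.rpow_neg (by positivity), neg_add']
  norm_num

lemma abel_bound {b : ℕ → ℂ} {C₀ : ℝ} (hC₀ : ∀ N, ‖∑ k ∈ Finset.range N, b k‖ ≤ C₀)
    {w : ℂ} {δ R : ℝ} (hδ : 0 < δ) (hwre : δ ≤ w.re) (hwn : ‖w‖ ≤ R) (N : ℕ) :
    ‖∑ k ∈ Finset.range N, b k * ((k + 1 : ℕ) : ℂ) ^ (-w)‖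
      ≤ C₀ * (1 + R * ∑' i : ℕ, ((i + 1 : ℝ)) ^ (-δ - 1)) := by
  have hC₀0 : 0 ≤ C₀ := le_trans (norm_nonneg _) (hC₀ 0)
  have hR0 : 0 ≤ R := le_trans (norm_nonneg _) hwn
  have hwre0 : 0 < w.re := lt_of_lt_of_le hδ hwre
  set T : ℝ := ∑' i : ℕ, ((i + 1 : ℝ)) ^ (-δ - 1) with hT
  have hT0 : 0 ≤ T := tsum_nonneg fun i => by positivity
  rcases Nat.eq_zero_or_pos N with rfl | hN
  · simp; positivity
  have key := Finset.sum_range_by_parts (fun i => ((i + 1 : ℕ) : ℂ) ^ (-w)) b N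
  have hcomm : ∀ k, b k * ((k + 1 : ℕ) : ℂ) ^ (-w) = ((k + 1 : ℕ) : ℂ) ^ (-w) • b k := by
    intro k; simp [smul_eq_mul, mul_comm]
  simp_rw [hcomm]
  rw [key]
  have hterm : ∀ i, ‖(((i + 1 + 1 : ℕ) : ℂ) ^ (-w) - ((i + 1 : ℕ) : ℂ) ^ (-w))
      • ∑ k ∈ Finset.range (i + 1), b k‖ ≤ (R * ((i + 1 : ℝ)) ^ (-δ - 1)) * C₀ := by
    intro i
    rw [norm_smul]
    have h1 : ‖((i + 1 + 1 : ℕ) : ℂ) ^ (-w) - ((i + 1 : ℕ) : ℂ) ^ (-w)‖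
        ≤ R * ((i + 1 : ℝ)) ^ (-δ - 1) := by
      have := cpow_diff_bound hwre0 i
      have h2 : ((i + 2 : ℕ) : ℂ) = ((i + 1 + 1 : ℕ) : ℂ) := by push_cast; ring
      rw [h2] at this
      refine le_trans this ?_
      have hb1 : (1:ℝ) ≤ (i + 1 : ℝ) := by
        have := Nat.cast_nonneg (α := ℝ) i; linarith
      exact mul_le_mul hwn (Real.rpow_le_rpow_of_exponent_le hb1 (by linarith))
        (by positivity) hR0
    exact mul_le_mul h1 (hC₀ _) (norm_nonneg _) (by positivity)
  calc ‖((N - 1 + 1 : ℕ) : ℂ) ^ (-w) • ∑ i ∈ Finset.range N, b i -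
        ∑ i ∈ Finset.range (N - 1), (((i + 1 + 1 : ℕ) : ℂ) ^ (-w) - ((i + 1 : ℕ) : ℂ) ^ (-w))
          • ∑ k ∈ Finset.range (i + 1), b k‖
      ≤ ‖((N - 1 + 1 : ℕ) : ℂ) ^ (-w) • ∑ i ∈ Finset.range N, b i‖ +
        ‖∑ i ∈ Finset.range (N - 1), (((i + 1 + 1 : ℕ) : ℂ) ^ (-w) - ((i + 1 : ℕ) : ℂ) ^ (-w))
          • ∑ k ∈ Finset.range (i + 1), b k‖ := norm_sub_le _ _
    _ ≤ 1 * C₀ + (R * T) * C₀ := by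
        gcongr
        · rw [norm_smul]
          refine mul_le_mul ?_ (hC₀ _) (norm_nonneg _) zero_le_one
          have hp : (0:ℝ) < (N - 1 + 1 : ℕ) := by positivity
          have : ((N - 1 + 1 : ℕ) : ℂ) = (((N - 1 + 1 : ℕ) : ℝ) : ℂ) := by push_cast; ring
          rw [this, Complex.norm_cpow_eq_rpow_re_of_pos hp]
          have : (-w).re = -w.re := by simp
          rw [this]
          calc ((N - 1 + 1 : ℕ) : ℝ) ^ (-w.re) ≤ ((N - 1 + 1 : ℕ) : ℝ) ^ (0:ℝ) :=
                Real.rpow_le_rpow_of_exponent_le (by exact_mod_cast Nat.succ_le_succ (Nat.zero_le _)) (by linarith)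
            _ = 1 := Real.rpow_zero _
        · refine le_trans (norm_sum_le _ _) ?_
          refine le_trans (Finset.sum_le_sum fun i _ => hterm i) ?_
          rw [← Finset.sum_mul]
          refine mul_le_mul_of_nonneg_right ?_ hC₀0
          rw [← Finset.mul_sum]
          refine mul_le_mul_of_nonneg_left ?_ hR0
          exact Summable.sum_le_tsum _ (fun i _ => by positivity) (psummable hδ)
    _ ≤ C₀ * (1 + R * T) := by ring_nf; nlinarith

lemma dirichlet_indep (s : Finset ℕ) :
    ∀ (g : ℕ → ℂ), (∀ σ : ℝ, ∑ i ∈ s, g i * ((i + 1 : ℕ) : ℂ) ^ (-(σ : ℂ)) = 0) →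
      ∀ i ∈ s, g i = 0 := by
  induction s using Finset.strongInduction with
  | _ s ih =>
    intro g hg i hi
    have hs : s.Nonempty := ⟨i, hi⟩
    set m := s.min' hs with hm
    have hmmem : m ∈ s := s.min'_mem hs
    -- key : for all σ, g m + (rest) = 0
    have hne : ∀ j : ℕ, ((j + 1 : ℕ) : ℂ) ≠ 0 := fun j =>
      Nat.cast_ne_zero.2 (Nat.succ_ne_zero j)
    have key : ∀ σ : ℝ, g m + ∑ j ∈ s.erase m,
        g j * ((j + 1 : ℕ) : ℂ) ^ (-(σ : ℂ)) * ((m + 1 : ℕ) : ℂ) ^ ((σ : ℂ)) = 0 := by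
      intro σ
      have h0 := hg σ
      have h1 : (∑ j ∈ s, g j * ((j + 1 : ℕ) : ℂ) ^ (-(σ : ℂ))) * ((m + 1 : ℕ) : ℂ) ^ ((σ : ℂ))
          = 0 := by rw [h0, zero_mul]
      rw [Finset.sum_mul, ← Finset.add_sum_erase _ _ hmmem] at h1
      have h2 : g m * ((m + 1 : ℕ) : ℂ) ^ (-(σ : ℂ)) * ((m + 1 : ℕ) : ℂ) ^ ((σ : ℂ)) = g m := by
        rw [mul_assoc, ← Complex.cpow_add _ _ (hne m)]
        simp
      rw [h2] at h1
      exact h1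
    have hlim : Tendsto (fun σ : ℝ => g m + ∑ j ∈ s.erase m,
        g j * ((j + 1 : ℕ) : ℂ) ^ (-(σ : ℂ)) * ((m + 1 : ℕ) : ℂ) ^ ((σ : ℂ)))
        atTop (nhds (g m + 0)) := by
      refine Tendsto.add tendsto_const_nhds ?_
      have : Tendsto (fun σ : ℝ => (0 : ℂ)) atTop (nhds 0) := tendsto_const_nhds
      have hsum0 : (0 : ℂ) = ∑ j ∈ s.erase m, (0 : ℂ) := by simp
      rw [hsum0]
      refine tendsto_finset_sum _ fun j hj => ?_
      have hjm : m < j := by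
        rcases Finset.mem_erase.1 hj with ⟨hne', hjs⟩
        exact lt_of_le_of_ne (s.min'_le j hjs) (Ne.symm hne')
      set c : ℝ := ((m : ℝ) + 1) / ((j : ℝ) + 1) with hc
      have hc0 : 0 < c := by positivity
      have hc1 : c < 1 := by
        rw [hc, div_lt_one (by positivity)]
        linarith [(Nat.cast_lt (α := ℝ)).2 hjm]
      have hnorm : ∀ σ : ℝ, ‖g j * ((j + 1 : ℕ) : ℂ) ^ (-(σ : ℂ)) * ((m + 1 : ℕ) : ℂ) ^ ((σ : ℂ))‖
          = ‖g j‖ * c ^ σ := by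
        intro σ
        rw [norm_mul, norm_mul, mul_assoc]
        congr 1
        have e1 : ((j + 1 : ℕ) : ℂ) = (((j : ℝ) + 1 : ℝ) : ℂ) := by push_cast; ring
        have e2 : ((m + 1 : ℕ) : ℂ) = (((m : ℝ) + 1 : ℝ) : ℂ) := by push_cast; ring
        rw [e1, e2,
          Complex.norm_cpow_eq_rpow_re_of_pos (by positivity),
          Complex.norm_cpow_eq_rpow_re_of_pos (by positivity)]
        simp only [neg_re, ofReal_re]
        rw [Real.rpow_neg (by positivity), hc,
          Real.div_rpow (by positivity) (by positivity), inv_mul_eq_div]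
      refine squeeze_zero_norm (fun σ => le_of_eq (hnorm σ)) ?_
      have := (tendsto_rpow_atTop_of_base_lt_one c (by linarith) hc1).const_mul ‖g j‖
      simpa using this
    have hzero : Tendsto (fun _ : ℝ => (0 : ℂ)) atTop (nhds (g m + 0)) := by
      have : (fun σ : ℝ => g m + ∑ j ∈ s.erase m,
          g j * ((j + 1 : ℕ) : ℂ) ^ (-(σ : ℂ)) * ((m + 1 : ℕ) : ℂ) ^ ((σ : ℂ)))
          = fun _ : ℝ => (0 : ℂ) := funext key
      rwa [this] at hlim
    have hgm : g m = 0 := by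
      have := tendsto_nhds_unique hzero tendsto_const_nhds
      simpa using this
    by_cases him : i = m
    · rwa [him]
    · refine ih (s.erase m) (Finset.erase_ssubset hmmem) g ?_ i (Finset.mem_erase.2 ⟨him, hi⟩)
      intro σ
      have h0 := hg σ
      rw [← Finset.add_sum_erase _ _ hmmem, hgm, zero_mul, zero_add] at h0
      exact h0

lemma coeFn_sum_eLp {K : Set ℂ} (hK : IsCompact K) (s : Finset ℕ) (g : ℕ → ℂ) :
    ((∑ i ∈ s, g i • eLp hK i : Lp ℂ 2 (volume.restrict K)) : ℂ → ℂ)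
      =ᵐ[volume.restrict K] fun z => ∑ i ∈ s, g i * eDir i z := by
  classical
  induction s using Finset.induction with
  | empty => simp only [Finset.sum_empty]; exact Lp.coeFn_zero ℂ 2 (volume.restrict K)
  | insert _ _ hx ih =>
    rename_i a s'
    rw [Finset.sum_insert hx]
    filter_upwards [Lp.coeFn_add (g a • eLp hK a) (∑ i ∈ s', g i • eLp hK i),
      Lp.coeFn_smul (g a) (eLp hK a), (eDir_memℒp hK a).coeFn_toLp, ih] with z h1 h2 h3 h4
    simp only [h1, Pi.add_apply, h2, Pi.smul_apply, smul_eq_mul, h4]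
    rw [Finset.sum_insert hx]
    congr 1
    rw [show ((eLp hK a : ℂ → ℂ) z) = eDir a z from h3]

lemma eLp_linearIndependent {K : Set ℂ} (hK : IsCompact K)
    (hKint : (interior K).Nonempty) : LinearIndependent ℂ (eLp hK) := by
  rw [linearIndependent_iff']
  intro s g hsg i hi
  set h : ℂ → ℂ := fun z => ∑ i ∈ s, g i * ((i + 1 : ℕ) : ℂ) ^ (-z) with hh
  have hne : ∀ j : ℕ, ((j + 1 : ℕ) : ℂ) ≠ 0 := fun j =>
    Nat.cast_ne_zero.2 (Nat.succ_ne_zero j)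
  have hcont : Continuous h := by
    refine continuous_finset_sum _ fun j _ => ?_
    exact continuous_const.mul (Continuous.const_cpow continuous_neg (Or.inl (hne j)))
  have hdiff : Differentiable ℂ h := by
    refine Differentiable.fun_sum fun j _ => ?_
    exact (differentiable_const _).mul fun z =>
      (differentiableAt_id.neg.const_cpow (Or.inl (hne j)))
  have hae : h =ᵐ[volume.restrict K] 0 := by
    have h0 : ((∑ i ∈ s, g i • eLp hK i : Lp ℂ 2 (volume.restrict K)) : ℂ → ℂ)
        =ᵐ[volume.restrict K] 0 := by
      rw [hsg]; exact Lp.coeFn_zero ℂ 2 (volume.restrict K)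
    filter_upwards [(coeFn_sum_eLp hK s g).symm.trans h0] with z hz
    simpa [hh, eDir] using hz
  have hIzero : ∀ z ∈ interior K, h z = 0 := by
    by_contra hcon
    push_neg at hcon
    obtain ⟨z, hz, hz0⟩ := hcon
    set V : Set ℂ := interior K ∩ {w | h w ≠ 0} with hV
    have hVopen : IsOpen V := isOpen_interior.inter (isOpen_ne_fun hcont continuous_const)
    have hVne : V.Nonempty := ⟨z, hz, hz0⟩
    have hVpos : 0 < volume V := hVopen.measure_pos volume hVne
    have hmeas : MeasurableSet {w : ℂ | h w ≠ 0} :=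
      (isOpen_ne_fun hcont continuous_const).measurableSet
    have hzero : volume.restrict K {w | h w ≠ 0} = 0 := by
      have := hae
      rw [Filter.EventuallyEq, ae_iff] at this
      simpa using this
    rw [Measure.restrict_apply hmeas] at hzero
    have hsub : V ⊆ {w | h w ≠ 0} ∩ K :=
      fun w hw => ⟨hw.2, interior_subset hw.1⟩
    have hlt : (0 : ENNReal) < volume ({w : ℂ | h w ≠ 0} ∩ K) :=
      lt_of_lt_of_le hVpos (measure_mono hsub)
    rw [hzero] at hlt
    exact lt_irrefl 0 hlt
  obtain ⟨z₀, hz₀⟩ := hKint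
  have hanalytic : AnalyticOnNhd ℂ h Set.univ :=
    hdiff.differentiableOn.analyticOnNhd isOpen_univ
  have heq : Set.EqOn h 0 Set.univ := by
    refine hanalytic.eqOn_zero_of_preconnected_of_eventuallyEq_zero
      isPreconnected_univ (Set.mem_univ z₀) ?_
    filter_upwards [isOpen_interior.mem_nhds hz₀] with w hw
    exact hIzero w hw
  refine dirichlet_indep s g (fun σ => ?_) i hi
  exact heq (Set.mem_univ (σ : ℂ))

variable {α : Type*} [MeasurableSpace α] {μ : Measure α}

lemma norm_toLp_sq {g : α → ℂ} (hg : MemLp g 2 μ) :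
    ‖hg.toLp g‖ ^ 2 = ∫ a, ‖g a‖ ^ 2 ∂μ := by
  set G := hg.toLp g with hG
  have h1 := (inner_self_eq_norm_sq (𝕜 := ℂ) G).symm
  rw [h1, L2.inner_def, ← integral_re (L2.integrable_inner G G)]
  refine integral_congr_ae ?_
  filter_upwards [hg.coeFn_toLp] with a ha
  rw [show ((G : α → ℂ) a) = g a from ha, RCLike.inner_apply', Complex.conj_mul',
    RCLike.re_to_complex]
  norm_cast

lemma inner_toLp_eq {g : α → ℂ} (hg : MemLp g 2 μ) (F : Lp ℂ 2 μ) :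
    ⟪F, hg.toLp g⟫_ℂ = ∫ a, (starRingEnd ℂ) ((F : α → ℂ) a) * g a ∂μ := by
  rw [L2.inner_def]
  refine integral_congr_ae ?_
  filter_upwards [hg.coeFn_toLp] with a ha
  rw [RCLike.inner_apply', show ((hg.toLp g : α → ℂ) a) = g a from ha]

lemma parseval_of_mem_closure {E : Type*} [NormedAddCommGroup E] [InnerProductSpace ℂ E]
    [CompleteSpace E] {v : ℕ → E} (hv : Orthonormal ℂ v) {x : E}
    (hx : x ∈ (Submodule.span ℂ (Set.range v)).topologicalClosure) :
    ‖x‖ ^ 2 = ∑' n : ℕ, ‖⟪v n, x⟫_ℂ‖ ^ 2 := by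
  set S : Submodule ℂ E := Submodule.span ℂ (Set.range v) with hS
  set U : Submodule ℂ E := S.topologicalClosure with hU
  haveI : CompleteSpace U := IsClosed.completeSpace_coe (hs := S.isClosed_topologicalClosure)
  set w : ℕ → U := fun n => ⟨v n, S.le_topologicalClosure (Submodule.subset_span (Set.mem_range_self n))⟩
    with hw
  have hwon : Orthonormal ℂ w := by
    rw [orthonormal_iff_ite] at hv ⊢
    intro i j
    have : ⟪w i, w j⟫_ℂ = ⟪v i, v j⟫_ℂ := rfl
    rw [this]; exact hv i j
  have hrange : (U.subtype : U → E) '' Set.range w = Set.range v := by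
    rw [← Set.range_comp]
    rfl
  have hsp : ⊤ ≤ (Submodule.span ℂ (Set.range w)).topologicalClosure := by
    intro u _
    have h1 : (u : E) ∈ closure (S : Set E) := u.2
    have h2 : ((U.subtype) '' ((Submodule.span ℂ (Set.range w) : Submodule ℂ U) : Set U)) = (S : Set E) := by
      rw [← Submodule.map_coe, Submodule.map_span, hrange, hS]
    rw [← SetLike.mem_coe, Submodule.topologicalClosure_coe]
    rw [closure_subtype]
    rw [show ((Subtype.val : U → E) '' ((Submodule.span ℂ (Set.range w) : Submodule ℂ U) : Set U))
        = (S : Set E) from h2]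
    exact h1
  let b : HilbertBasis ℕ ℂ U := HilbertBasis.mk hwon hsp
  set xu : U := ⟨x, hx⟩ with hxu
  have hnx : ‖x‖ = ‖xu‖ := rfl
  have hrepr : ‖xu‖ = ‖b.repr xu‖ := (b.repr.norm_map xu).symm
  have hlp : ‖b.repr xu‖ ^ 2 = ∑' n : ℕ, ‖b.repr xu n‖ ^ 2 := by
    have h2 : (0 : ℝ) < (2 : ENNReal).toReal := by norm_num
    have := lp.norm_rpow_eq_tsum h2 (b.repr xu)
    have e : ((2 : ENNReal).toReal : ℝ) = (2 : ℝ) := by norm_num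
    rw [e] at this
    calc ‖b.repr xu‖ ^ 2 = ‖b.repr xu‖ ^ (2 : ℝ) := by
          rw [← Real.rpow_natCast]; norm_num
      _ = ∑' n : ℕ, ‖b.repr xu n‖ ^ (2 : ℝ) := this
      _ = ∑' n : ℕ, ‖b.repr xu n‖ ^ 2 := by
          refine tsum_congr fun n => ?_
          rw [← Real.rpow_natCast]; norm_num
  have hcoef : ∀ n, b.repr xu n = ⟪v n, x⟫_ℂ := by
    intro n
    rw [b.repr_apply_apply]
    have hb : b n = w n := by
      have := HilbertBasis.coe_mk hwon hsp
      rw [show (⇑b : ℕ → U) = w from this]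
    rw [hb]
    rfl
  rw [hnx, hrepr, hlp]
  exact tsum_congr fun n => by rw [hcoef n]

/-- for a compact `K` with nonempty interior contained in `Re s > 0` and a
Dirichlet series `Σ x(k) k^{-s}` converging pointwise to `f` on `Re s > 0`, Parseval's
identity `‖f‖²_{L²(K)} = Σ_n |⟨e′_n(K), f⟩|²` holds; in particular `f` lies in the `L²(K)`
closure of the span of the `n^{-s}`. -/
theorem statement9 {K : Set ℂ} (hK : IsCompact K) (hKpos : K ⊆ {s : ℂ | 0 < s.re})
    (hKint : (interior K).Nonempty) (x : ℕ → ℂ) (f : ℂ → ℂ)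
    (hf : ∀ s : ℂ, 0 < s.re →
      Tendsto (fun N : ℕ => ∑ k ∈ Finset.range N, x (k + 1) * ((k + 1 : ℕ) : ℂ) ^ (-s))
        atTop (nhds (f s))) :
    ((∫ s in K, ‖f s‖ ^ 2) =
      ∑' n : ℕ, ‖∫ s in K, (starRingEnd ℂ) ((ePrime hK n : ℂ → ℂ) s) * f s‖ ^ 2) ∧
    (∀ ε : ℝ, 0 < ε → ∃ c : ℕ →₀ ℂ,
      (∫ s in K, ‖f s - ∑ k ∈ c.support, c k * ((k + 1 : ℕ) : ℂ) ^ (-s)‖ ^ 2) < ε ^ 2) := by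
  classical
  haveI : IsFiniteMeasure (volume.restrict K) :=
    ⟨by simpa [Measure.restrict_apply_univ] using hK.measure_lt_top⟩
  have hKne : K.Nonempty := hKint.mono interior_subset
  obtain ⟨s₀, hs₀K, hs₀min'⟩ := hK.exists_isMinOn hKne Complex.continuous_re.continuousOn
  have hs₀min : ∀ s ∈ K, s₀.re ≤ s.re := fun s hs => hs₀min' hs
  set δ : ℝ := s₀.re with hδdef
  have hδ : 0 < δ := hKpos hs₀K
  obtain ⟨sR, _, hsRmax'⟩ := hK.exists_isMaxOn hKne continuous_norm.continuousOn
  have hsRmax : ∀ s ∈ K, ‖s‖ ≤ ‖sR‖ := fun s hs => hsRmax' hs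
  set R : ℝ := ‖sR‖ + δ / 2 with hRdef
  set s₁ : ℂ := ((δ / 2 : ℝ) : ℂ) with hs₁
  have hs₁re : 0 < s₁.re := by rw [hs₁]; simp; positivity
  set b : ℕ → ℂ := fun k => x (k + 1) * ((k + 1 : ℕ) : ℂ) ^ (-s₁) with hb
  have hconv : Tendsto (fun N => ∑ k ∈ Finset.range N, b k) atTop (nhds (f s₁)) := hf s₁ hs₁re
  obtain ⟨C₀, hC₀'⟩ := hconv.norm.bddAbove_range
  have hC₀ : ∀ N, ‖∑ k ∈ Finset.range N, b k‖ ≤ C₀ := fun N => hC₀' ⟨N, rfl⟩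
  set T : ℝ := ∑' i : ℕ, ((i + 1 : ℝ)) ^ (-(δ / 2) - 1) with hT
  set M : ℝ := C₀ * (1 + R * T) with hM
  have hcne : ∀ k : ℕ, ((k + 1 : ℕ) : ℂ) ≠ 0 := fun k => Nat.cast_ne_zero.2 (Nat.succ_ne_zero k)
  have hterm : ∀ k : ℕ, ∀ s : ℂ, x (k + 1) * ((k + 1 : ℕ) : ℂ) ^ (-s)
      = b k * ((k + 1 : ℕ) : ℂ) ^ (-(s - s₁)) := by
    intro k s
    rw [hb, mul_assoc, ← Complex.cpow_add _ _ (hcne k)]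
    congr 2
    ring
  set SN : ℕ → ℂ → ℂ := fun N s => ∑ k ∈ Finset.range N, x (k + 1) * ((k + 1 : ℕ) : ℂ) ^ (-s)
    with hSNdef
  have hScont : ∀ N, Continuous (SN N) := by
    intro N
    refine continuous_finset_sum _ fun k _ => ?_
    exact continuous_const.mul (Continuous.const_cpow continuous_neg (Or.inl (hcne k)))
  have hSbound : ∀ s ∈ K, ∀ N, ‖SN N s‖ ≤ M := by
    intro s hs N
    have h1 : SN N s = ∑ k ∈ Finset.range N, b k * ((k + 1 : ℕ) : ℂ) ^ (-(s - s₁)) :=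
      Finset.sum_congr rfl fun k _ => hterm k s
    rw [h1, hM, hT]
    refine abel_bound hC₀ (by positivity) ?_ ?_ N
    · have := hs₀min s hs
      rw [Complex.sub_re, hs₁]
      simp only [Complex.ofReal_re]
      linarith
    · calc ‖s - s₁‖ ≤ ‖s‖ + ‖s₁‖ := norm_sub_le _ _
        _ ≤ ‖sR‖ + δ / 2 := by
            refine add_le_add (hsRmax s hs) ?_
            rw [hs₁, Complex.norm_real, Real.norm_eq_abs, abs_of_pos (by positivity)]
  have hfbound : ∀ s ∈ K, ‖f s‖ ≤ M := fun s hs =>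
    le_of_tendsto (hf s (hKpos hs)).norm (Eventually.of_forall fun N => hSbound s hs N)
  have hfmeas : AEStronglyMeasurable f (volume.restrict K) := by
    refine aestronglyMeasurable_of_tendsto_ae atTop
      (fun N => (hScont N).aestronglyMeasurable) ?_
    exact (ae_restrict_iff' hK.measurableSet).mpr
      (Eventually.of_forall fun s hs => hf s (hKpos hs))
  have hfmem : MemLp f 2 (volume.restrict K) :=
    MemLp.of_bound hfmeas M
      ((ae_restrict_iff' hK.measurableSet).mpr (Eventually.of_forall hfbound))
  set F : Lp ℂ 2 (volume.restrict K) := hfmem.toLp f with hF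
  have hSmem : ∀ N, MemLp (SN N) 2 (volume.restrict K) := by
    intro N
    exact memLp_finsetSum (Finset.range N)
      (fun k _ => (eDir_memℒp hK k).const_mul (x (k + 1)))
  set SLp : ℕ → Lp ℂ 2 (volume.restrict K) :=
    fun N => ∑ k ∈ Finset.range N, x (k + 1) • eLp hK k with hSLpdef
  have hSLp_eq : ∀ N, SLp N = (hSmem N).toLp (SN N) := by
    intro N
    refine Lp.ext ?_
    refine (coeFn_sum_eLp hK (Finset.range N) (fun k => x (k + 1))).trans ?_
    have he : (fun z => ∑ i ∈ Finset.range N, x (i + 1) * eDir i z) = SN N := rfl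
    rw [he]
    exact ((hSmem N).coeFn_toLp).symm
  have hnorm_eq : ∀ N, ‖SLp N - F‖ ^ 2 = ∫ s in K, ‖SN N s - f s‖ ^ 2 := by
    intro N
    rw [hSLp_eq N, hF, ← MemLp.toLp_sub (hSmem N) hfmem, norm_toLp_sq]
    simp only [Pi.sub_apply]
  have hL2tendsto : Tendsto (fun N => ∫ s in K, ‖SN N s - f s‖ ^ 2) atTop (nhds 0) := by
    have h0 : (0 : ℝ) = ∫ (_ : ℂ) in K, (0 : ℝ) := by simp
    rw [h0]
    refine tendsto_integral_of_dominated_convergence (fun _ => (2 * M) ^ 2) ?_ ?_ ?_ ?_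
    · intro N
      have h1 := ((hScont N).aestronglyMeasurable.sub hfmeas).norm
      simpa [pow_two] using h1.fun_mul h1
    · exact integrable_const _
    · intro N
      refine (ae_restrict_iff' hK.measurableSet).mpr (Eventually.of_forall fun s hs => ?_)
      have h2 : ‖SN N s - f s‖ ≤ 2 * M := by
        calc ‖SN N s - f s‖ ≤ ‖SN N s‖ + ‖f s‖ := norm_sub_le _ _
          _ ≤ M + M := add_le_add (hSbound s hs N) (hfbound s hs)
          _ = 2 * M := by ring
      rw [Real.norm_eq_abs, _root_.abs_of_nonneg (by positivity : (0:ℝ) ≤ ‖SN N s - f s‖ ^ 2)]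
      exact pow_le_pow_left₀ (norm_nonneg _) h2 2
    · refine (ae_restrict_iff' hK.measurableSet).mpr (Eventually.of_forall fun s hs => ?_)
      have h3 : Tendsto (fun N => SN N s - f s) atTop (nhds (f s - f s)) :=
        (hf s (hKpos hs)).sub tendsto_const_nhds
      rw [sub_self] at h3
      simpa using (h3.norm.pow 2)
  have hLpTendsto : Tendsto SLp atTop (nhds F) := by
    rw [tendsto_iff_norm_sub_tendsto_zero]
    have h1 : ∀ N, ‖SLp N - F‖ = Real.sqrt (∫ s in K, ‖SN N s - f s‖ ^ 2) := fun N => by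
      rw [← hnorm_eq N, Real.sqrt_sq (norm_nonneg _)]
    simp only [h1]
    simpa using hL2tendsto.sqrt
  have hspan_eq : Submodule.span ℂ (Set.range (ePrime hK))
      = Submodule.span ℂ (Set.range (eLp hK)) := by
    have h1 : ePrime hK = InnerProductSpace.gramSchmidtNormed ℂ (eLp hK) := rfl
    rw [h1, InnerProductSpace.span_gramSchmidtNormed_range (eLp hK), InnerProductSpace.span_gramSchmidt ℂ (eLp hK)]
  have hFmem : F ∈ (Submodule.span ℂ (Set.range (ePrime hK))).topologicalClosure := by
    rw [hspan_eq, ← SetLike.mem_coe, Submodule.topologicalClosure_coe]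
    refine mem_closure_of_tendsto hLpTendsto (Eventually.of_forall fun N => ?_)
    exact Submodule.sum_mem _ fun k _ =>
      Submodule.smul_mem _ _ (Submodule.subset_span ⟨k, rfl⟩)
  have hON : Orthonormal ℂ (ePrime hK) :=
    InnerProductSpace.gramSchmidtNormed_orthonormal (eLp_linearIndependent hK hKint)
  have hpars := parseval_of_mem_closure hON hFmem
  constructor
  · rw [show (∫ s in K, ‖f s‖ ^ 2) = ‖F‖ ^ 2 from (norm_toLp_sq hfmem).symm, hpars]
    exact tsum_congr fun n => by rw [inner_toLp_eq hfmem (ePrime hK n)]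
  · intro ε hε
    have hev := (tendsto_iff_norm_sub_tendsto_zero.mp hLpTendsto).eventually (gt_mem_nhds hε)
    obtain ⟨N, hN⟩ := hev.exists
    set c : ℕ →₀ ℂ := Finsupp.onFinset (Finset.range N)
      (fun k => if k ∈ Finset.range N then x (k + 1) else 0)
      (fun k hk => by by_contra h; simp [h] at hk) with hc
    refine ⟨c, ?_⟩
    have hsum : ∀ s : ℂ, ∑ k ∈ c.support, c k * ((k + 1 : ℕ) : ℂ) ^ (-s) = SN N s := by
      intro s
      rw [Finset.sum_subset Finsupp.support_onFinset_subset (fun k _ hknot => by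
        rw [Finsupp.notMem_support_iff.1 hknot, zero_mul])]
      refine Finset.sum_congr rfl fun k hk => ?_
      rw [show c k = x (k + 1) from by rw [hc, Finsupp.onFinset_apply, if_pos hk]]
    have hint_eq : (∫ s in K, ‖f s - ∑ k ∈ c.support, c k * ((k + 1 : ℕ) : ℂ) ^ (-s)‖ ^ 2)
        = ‖F - SLp N‖ ^ 2 := by
      simp only [hsum]
      calc (∫ s in K, ‖f s - SN N s‖ ^ 2)
          = (∫ s in K, ‖(f - SN N) s‖ ^ 2) := by simp only [Pi.sub_apply]
        _ = ‖(hfmem.sub (hSmem N)).toLp (f - SN N)‖ ^ 2 := (norm_toLp_sq _).symm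
        _ = ‖F - SLp N‖ ^ 2 := by rw [MemLp.toLp_sub hfmem (hSmem N), ← hSLp_eq N, hF]
    rw [hint_eq, ← norm_sub_rev]
    exact pow_lt_pow_left₀ hN (norm_nonneg _) two_ne_zero
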